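/- Let A be a subset of the finite state space S of a Markov chain. For all x ∈ A and y ∈ S∖A, the exit probability decomposes over simple paths: Pˣ(X_{τ_{S∖A}} = y) = Σ_{γ ∈ Γ_A(x,y), p(γ)>0} Π_{i=1}^{|γ|−1} p(γ_i, γ_{i+1}) / (1 − P^{γ_i}(X_{τ⁺_{(S∖A)∪{γ_1,…,γ_i}}} = γ_i)). -/

import Mathlib

def pathProb {S : Type*} (p : S → S → ℝ) : List S → ℝ
  | [] => 1
  | [_] => 1
  | a :: b :: l => p a b * pathProb p (b :: l)

/-- `Pˣ(X_{τ_{S∖A}} = y)` : probability that the chain started at `x` leaves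
`A` for the first time at `y` (all states strictly before the exit lie in `A`). -/
noncomputable def exitProb {S : Type*} (p : S → S → ℝ) (A : Set S)
    (x y : S) : ℝ :=
  ∑' γ : {γ : List S // γ.head? = some x ∧ γ.getLast? = some y ∧
      2 ≤ γ.length ∧ ∀ z ∈ γ.dropLast, z ∈ A},
    pathProb p γ.1

/-- `Pᶻ(X_{τ⁺_B} = z)` : probability that the first positive visit to `B`
is a return to `z` itself (intermediate states avoid `B`). -/
noncomputable def returnAvoid {S : Type*} (p : S → S → ℝ) (B : Set S)
    (z : S) : ℝ :=
  ∑' γ : {γ : List S // γ.head? = some z ∧ γ.getLast? = some z ∧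
      2 ≤ γ.length ∧ ∀ w ∈ (γ.drop 1).dropLast, w ∉ B},
    pathProb p γ.1

/-- The product `Π_i p(γ_i, γ_{i+1}) / (1 − P^{γ_i}(X_{τ⁺_{(S∖A)∪{γ_1,…,γ_i}}} = γ_i))`
along a path `γ`, where `pref` records the already visited prefix of `γ`. -/
noncomputable def rhsProd {S : Type*} (p : S → S → ℝ) (A : Set S) :
    List S → List S → ℝ
  | _, [] => 1
  | _, [_] => 1
  | pref, a :: b :: l =>
      (p a b / (1 - returnAvoid p {z | z ∉ A ∨ z ∈ pref ++ [a]} a)) *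
        rhsProd p A (pref ++ [a]) (b :: l)

/-- `γ ∈ Γ_A(x,y)` : a repetition-free path from `x` to `y` with all
intermediate states in `A`. -/
def SimplePathIn {S : Type*} (A : Set S) (x y : S) (γ : List S) : Prop :=
  γ.head? = some x ∧ γ.getLast? = some y ∧ 2 ≤ γ.length ∧ γ.Nodup ∧
    ∀ z ∈ (γ.drop 1).dropLast, z ∈ A


open scoped ENNReal

namespace ExitDecomp

set_option linter.unusedSectionVars false

variable {S : Type*} [DecidableEq S]

noncomputable def w (p : S → S → ℝ) : S → List S → ℝ≥0∞
  | _, [] => 1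
  | a, b :: u => ENNReal.ofReal (p a b) * w p b u

lemma pathProb_nonneg (p : S → S → ℝ) (hp : ∀ x y, 0 ≤ p x y) :
    ∀ γ, 0 ≤ pathProb p γ
  | [] => by rw [pathProb]; exact zero_le_one
  | [_] => zero_le_one
  | a :: b :: l => by
      rw [pathProb]
      exact mul_nonneg (hp a b) (pathProb_nonneg p hp (b :: l))

lemma w_eq (p : S → S → ℝ) (hp : ∀ x y, 0 ≤ p x y) :
    ∀ a t, w p a t = ENNReal.ofReal (pathProb p (a :: t))
  | _, [] => by simp [w, pathProb]
  | a, b :: u => by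
      rw [w, pathProb, ENNReal.ofReal_mul (hp a b), w_eq p hp b u]

lemma w_ne_top (p : S → S → ℝ) : ∀ a t, w p a t ≠ ∞
  | _, [] => by simp [w]
  | a, b :: u => by
      rw [w]
      exact ENNReal.mul_ne_top ENNReal.ofReal_ne_top (w_ne_top p b u)

lemma w_append (p : S → S → ℝ) (x : S) :
    ∀ (s : List S) (a : S) (u : List S),
      w p a (s ++ x :: u) = w p a (s ++ [x]) * w p x u
  | [], a, u => by simp [w]
  | b :: s, a, u => by
      simp only [List.cons_append, w, List.append_eq, w_append p x s b u, mul_assoc]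

def lastD (a : S) (t : List S) : S := (a :: t).getLast (List.cons_ne_nil _ _)

lemma lastD_nil (a : S) : lastD a ([] : List S) = a := rfl

lemma lastD_cons (a b : S) (t : List S) : lastD a (b :: t) = lastD b t := by
  simp [lastD, List.getLast_cons]

lemma w_snoc (p : S → S → ℝ) :
    ∀ (t : List S) (a b : S),
      w p a (t ++ [b]) = w p a t * ENNReal.ofReal (p (lastD a t) b)
  | [], a, b => by simp [w, lastD]
  | c :: t, a, b => by
      simp only [List.cons_append, w, List.append_eq, w_snoc p t c b, lastD_cons, mul_assoc]

/-- exit-tail set: tails ending at `z` with all pre-exit states in `C`. -/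
def ETl (C : Set S) (z : S) : Set (List S) :=
  {t | t.getLast? = some z ∧ ∀ c ∈ t.dropLast, c ∈ C}

noncomputable def ee (p : S → S → ℝ) (C : Set S) (a z : S) : ℝ≥0∞ :=
  ∑' t : ETl C z, w p a t

/-- generic cons equivalence -/
def consE (x : S) (P Q : List S → Prop)
    (h1 : ∀ t, Q t → P (x :: t)) (h2 : ∀ γ, P γ → ∃ t, γ = x :: t ∧ Q t) :
    {t // Q t} ≃ {γ // P γ} where
  toFun t := ⟨x :: t.1, h1 _ t.2⟩
  invFun γ := ⟨γ.1.tail, by obtain ⟨t, ht, hq⟩ := h2 _ γ.2; rw [ht]; exact hq⟩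
  left_inv t := rfl
  right_inv γ := by
    apply Subtype.ext
    obtain ⟨t, ht, -⟩ := h2 _ γ.2
    simp [ht]

/-- generic snoc equivalence -/
def snocE (x : S) (P Q : List S → Prop)
    (h1 : ∀ s, Q s → P (s ++ [x])) (h2 : ∀ v, P v → ∃ s, v = s ++ [x] ∧ Q s) :
    {s // Q s} ≃ {v // P v} where
  toFun s := ⟨s.1 ++ [x], h1 _ s.2⟩
  invFun v := ⟨v.1.dropLast, by
    obtain ⟨s, hs, hq⟩ := h2 _ v.2; rw [hs, List.dropLast_concat]; exact hq⟩
  left_inv s := by apply Subtype.ext; simp [List.dropLast_concat]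
  right_inv v := by
    apply Subtype.ext
    obtain ⟨s, hs, -⟩ := h2 _ v.2
    simp [hs, List.dropLast_concat]

/-- split a list at the first occurrence of `x` -/
def sp (x : S) : List S → List S × List S
  | [] => ([], [])
  | a :: t => if a = x then ([], t) else ((a :: (sp x t).1), (sp x t).2)

lemma sp_not_mem (x : S) : ∀ t : List S, x ∉ (sp x t).1
  | [] => by simp [sp]
  | a :: t => by
      by_cases h : a = x
      · simp [sp, h]
      · simp only [sp, if_neg h, List.mem_cons]
        rintro (rfl | hm)
        · exact h rfl
        · exact sp_not_mem x t hm

lemma sp_spec (x : S) : ∀ t : List S, x ∈ t → t = (sp x t).1 ++ x :: (sp x t).2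
  | a :: t, h => by
      by_cases ha : a = x
      · simp [sp, ha]
      · simp only [sp, if_neg ha, List.cons_append, List.cons.injEq, true_and]
        exact sp_spec x t (by rcases List.mem_cons.1 h with rfl | h; exact absurd rfl ha; exact h)

lemma sp_append (x : S) : ∀ (s u : List S), x ∉ s → sp x (s ++ x :: u) = (s, u)
  | [], u, _ => by simp [sp]
  | a :: s, u, h => by
      have ha : a ≠ x := fun e => h (by simp [e])
      simp only [List.cons_append, sp, List.append_eq, if_neg ha,
        sp_append x s u (fun m => h (by simp [m]))]

/-- generic splitting equivalence at the first occurrence of `x` -/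
def splitE (x : S) (P Q R : List S → Prop)
    (hQ : ∀ s, Q s → x ∉ s)
    (h1 : ∀ s u, Q s → R u → P (s ++ x :: u))
    (h2 : ∀ γ, P γ → x ∈ γ)
    (h3 : ∀ s u, x ∉ s → P (s ++ x :: u) → Q s ∧ R u) :
    {γ // P γ} ≃ {s // Q s} × {u // R u} where
  toFun γ :=
    have hsp : P ((sp x γ.1).1 ++ x :: (sp x γ.1).2) := by
      rw [← sp_spec x γ.1 (h2 _ γ.2)]; exact γ.2
    ⟨⟨(sp x γ.1).1, (h3 _ _ (sp_not_mem x γ.1) hsp).1⟩,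
     ⟨(sp x γ.1).2, (h3 _ _ (sp_not_mem x γ.1) hsp).2⟩⟩
  invFun su := ⟨su.1.1 ++ x :: su.2.1, h1 _ _ su.1.2 su.2.2⟩
  left_inv γ := by
    apply Subtype.ext
    exact (sp_spec x γ.1 (h2 _ γ.2)).symm
  right_inv su := by
    have := sp_append x su.1.1 su.2.1 (hQ _ su.1.2)
    ext <;> simp [this]

end ExitDecomp
section Stage2
set_option linter.unusedSectionVars false
open scoped ENNReal
namespace ExitDecomp

variable {S : Type*} [DecidableEq S]

lemma tsum_set_mono {s v : Set (List S)} (h : s ⊆ v) (f : List S → ℝ≥0∞) :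
    ∑' t : s, f t ≤ ∑' t : v, f t := by
  rw [tsum_subtype, tsum_subtype]
  exact ENNReal.tsum_le_tsum fun t =>
    Set.indicator_le_indicator_of_subset h (fun _ => zero_le) t

lemma tsum_set_split (s : Set (List S)) (Q : List S → Prop) (f : List S → ℝ≥0∞) :
    ∑' t : s, f t =
      (∑' t : {t | t ∈ s ∧ Q t}, f t) + ∑' t : {t | t ∈ s ∧ ¬ Q t}, f t := by
  classical
  rw [tsum_subtype, tsum_subtype, tsum_subtype, ← ENNReal.tsum_add]
  apply tsum_congr; intro t
  by_cases hs : t ∈ s <;> by_cases hq : Q t <;>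
    simp [Set.indicator_apply, hs, hq]

lemma tsum_eq_of_set_eq {s v : Set (List S)} (h : s = v) (f : List S → ℝ≥0∞) :
    ∑' t : s, f t = ∑' t : v, f t := by rw [h]

lemma etl_ne_nil {C : Set S} {z : S} {t : List S} (h : t ∈ ETl C z) : t ≠ [] := by
  rintro rfl
  simp [ETl] at h

lemma getLast?_cons_ne (a : S) {u : List S} (hu : u ≠ []) :
    (a :: u).getLast? = u.getLast? :=
  List.getLast?_append_of_ne_nil [a] hu

lemma getLast_of_getLast? {t : List S} {z : S} (h : t.getLast? = some z) :
    ∃ hne : t ≠ [], t.getLast hne = z := by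
  have hne : t ≠ [] := by rintro rfl; simp at h
  refine ⟨hne, ?_⟩
  rw [List.getLast?_eq_getLast_of_ne_nil hne] at h
  exact Option.some_injective _ h

lemma eq_dropLast_concat {t : List S} {z : S} (h : t.getLast? = some z) :
    t = t.dropLast ++ [z] := by
  obtain ⟨hne, hl⟩ := getLast_of_getLast? h
  conv_lhs => rw [← List.dropLast_append_getLast hne]
  rw [hl]

lemma mem_ETl_append {C : Set S} {x y : S} {s u : List S}
    (hx : x ∈ C) (hs : ∀ c ∈ s, c ∈ C ∧ c ≠ x) (hu : u ∈ ETl C y) :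
    (s ++ x :: u) ∈ ETl C y := by
  obtain ⟨hgl, hdl⟩ := hu
  have hune : u ≠ [] := etl_ne_nil ⟨hgl, hdl⟩
  constructor
  · rw [List.getLast?_append_of_ne_nil s (by simp : (x :: u) ≠ []),
      getLast?_cons_ne x hune]
    exact hgl
  · intro c hc
    have : s ++ x :: u = (s ++ [x]) ++ u := by simp
    rw [this, List.dropLast_append_of_ne_nil hune] at hc
    rcases List.mem_append.1 hc with hc | hc
    · rcases List.mem_append.1 hc with hc | hc
      · exact (hs c hc).1
      · rw [List.mem_singleton.1 hc]; exact hx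
    · exact hdl c hc

lemma ETl_append {C : Set S} {x y : S} {s u : List S} (hxy : x ≠ y)
    (hxs : x ∉ s) (h : (s ++ x :: u) ∈ ETl C y) :
    (∀ c ∈ s, c ∈ C ∧ c ≠ x) ∧ u ∈ ETl C y := by
  obtain ⟨hgl, hdl⟩ := h
  have hune : u ≠ [] := by
    rintro rfl
    rw [show s ++ [x] = s ++ [x] from rfl, List.getLast?_concat] at hgl
    exact hxy (Option.some_injective _ hgl)
  have hsplit : s ++ x :: u = (s ++ [x]) ++ u := by simp
  have hdl' : ∀ c ∈ (s ++ [x]) ++ u.dropLast, c ∈ C := by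
    intro c hc
    apply hdl
    rw [hsplit, List.dropLast_append_of_ne_nil hune]
    exact hc
  refine ⟨fun c hc => ⟨hdl' c (by simp [hc]), fun e => hxs (e ▸ hc)⟩, ?_, ?_⟩
  · rw [hsplit, List.getLast?_append_of_ne_nil _ hune] at hgl
    exact hgl
  · intro c hc
    exact hdl' c (by simp [hc])

end ExitDecomp
end Stage2
section Stage3
set_option linter.unusedSectionVars false
open scoped ENNReal
namespace ExitDecomp

variable {S : Type*} [Fintype S] [DecidableEq S]

/-- stopped paths: stay in `C` then end strictly outside. -/
def Stp (C : Set S) : Set (List S) :=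
  {t | ∃ z, t.getLast? = some z ∧ z ∉ C ∧ ∀ c ∈ t.dropLast, c ∈ C}

noncomputable def SA (p : S → S → ℝ) (C : Set S) (a : S) (n : ℕ) : ℝ≥0∞ :=
  ∑' t : {t : List S | (∀ c ∈ t, c ∈ C) ∧ t.length = n}, w p a t

noncomputable def SD (p : S → S → ℝ) (C : Set S) (a : S) (n : ℕ) : ℝ≥0∞ :=
  ∑' t : {t : List S | t ∈ Stp C ∧ t.length = n}, w p a t

lemma rowE (p : S → S → ℝ) (hp : ∀ x y, 0 ≤ p x y) (hrow : ∀ x, ∑ y, p x y = 1)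
    (c : S) : ∑ b, ENNReal.ofReal (p c b) = 1 := by
  rw [← ENNReal.ofReal_sum_of_nonneg (fun i _ => hp c i), hrow c, ENNReal.ofReal_one]

def stepE (C : Set S) (n : ℕ) :
    (↥{t : List S | (∀ c ∈ t, c ∈ C) ∧ t.length = n} × S) ≃
      ↥{t : List S | (∀ c ∈ t.dropLast, c ∈ C) ∧ t.length = n + 1} where
  toFun q := ⟨q.1.1 ++ [q.2], by
    refine ⟨?_, by simp [q.1.2.2]⟩
    rw [List.dropLast_concat]
    exact fun c hc => q.1.2.1 c hc⟩
  invFun t :=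
    have hne : t.1 ≠ [] := List.ne_nil_of_length_pos (by rw [t.2.2]; omega)
    (⟨t.1.dropLast, t.2.1, by rw [List.length_dropLast, t.2.2]; rfl⟩, t.1.getLast hne)
  left_inv q := by
    obtain ⟨⟨t, ht⟩, b⟩ := q
    refine Prod.ext (Subtype.ext ?_) ?_
    · simp [List.dropLast_concat]
    · simp [List.getLast_concat]
  right_inv t := by
    apply Subtype.ext
    exact List.dropLast_append_getLast _

lemma SA_step (p : S → S → ℝ) (hp : ∀ x y, 0 ≤ p x y) (hrow : ∀ x, ∑ y, p x y = 1)
    (C : Set S) (a : S) (n : ℕ) :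
    SA p C a n = SD p C a (n + 1) + SA p C a (n + 1) := by
  have h1 : (∑' t : {t : List S | (∀ c ∈ t.dropLast, c ∈ C) ∧ t.length = n + 1},
      w p a t) = SA p C a n := by
    rw [← (stepE C n).tsum_eq (fun t => w p a t.1)]
    have : ∀ q : ↥{t : List S | (∀ c ∈ t, c ∈ C) ∧ t.length = n} × S,
        w p a ((stepE C n) q).1 = w p a q.1.1 * ENNReal.ofReal (p (lastD a q.1.1) q.2) := by
      intro q; exact w_snoc p q.1.1 a q.2
    rw [tsum_congr this, ENNReal.tsum_prod']
    unfold SA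
    apply tsum_congr; intro t
    have hb : ∀ b : S, w p a (↑(t, b).1 : List S) *
        ENNReal.ofReal (p (lastD a ↑(t, b).1) (t, b).2) =
        w p a ↑t * ENNReal.ofReal (p (lastD a ↑t) b) := fun b => rfl
    rw [tsum_congr hb, ENNReal.tsum_mul_left, tsum_fintype, rowE p hp hrow, mul_one]
  have h2 : (∑' t : {t : List S | (∀ c ∈ t.dropLast, c ∈ C) ∧ t.length = n + 1},
      w p a t) = SD p C a (n + 1) + SA p C a (n + 1) := by
    have hset1 : {t | t ∈ {t : List S | (∀ c ∈ t.dropLast, c ∈ C) ∧ t.length = n + 1} ∧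
        (∃ z, t.getLast? = some z ∧ z ∉ C)} = {t | t ∈ Stp C ∧ t.length = n + 1} := by
      ext t
      simp only [Set.mem_setOf_eq, Stp]
      constructor
      · rintro ⟨⟨hdl, hlen⟩, z, hgl, hz⟩
        exact ⟨⟨z, hgl, hz, hdl⟩, hlen⟩
      · rintro ⟨⟨z, hgl, hz, hdl⟩, hlen⟩
        exact ⟨⟨hdl, hlen⟩, z, hgl, hz⟩
    have hset2 : {t | t ∈ {t : List S | (∀ c ∈ t.dropLast, c ∈ C) ∧ t.length = n + 1} ∧
        ¬ (∃ z, t.getLast? = some z ∧ z ∉ C)} =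
        {t : List S | (∀ c ∈ t, c ∈ C) ∧ t.length = n + 1} := by
      ext t
      simp only [Set.mem_setOf_eq, not_exists]
      constructor
      · rintro ⟨⟨hdl, hlen⟩, hq⟩
        have hne : t ≠ [] := List.ne_nil_of_length_pos (by rw [hlen]; omega)
        refine ⟨fun c hc => ?_, hlen⟩
        conv at hc => rw [← List.dropLast_append_getLast hne]
        rcases List.mem_append.1 hc with hc | hc
        · exact hdl c hc
        · rw [List.mem_singleton.1 hc]
          by_contra hcon
          exact hq _ ⟨by rw [List.getLast?_eq_getLast_of_ne_nil hne], hcon⟩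
      · rintro ⟨hall, hlen⟩
        refine ⟨⟨fun c hc => hall c (List.dropLast_subset _ hc), hlen⟩, ?_⟩
        rintro z ⟨hz, hznC⟩
        obtain ⟨hne, hl⟩ := getLast_of_getLast? hz
        exact hznC (hall z (hl ▸ List.getLast_mem hne))
    rw [tsum_set_split _ (fun t => ∃ z, t.getLast? = some z ∧ z ∉ C) (w p a), hset1, hset2]
    rfl
  rw [← h1, h2]

lemma SA_zero (p : S → S → ℝ) (C : Set S) (a : S) : SA p C a 0 = 1 := by
  unfold SA
  rw [show {t : List S | (∀ c ∈ t, c ∈ C) ∧ t.length = 0} = {([] : List S)} by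
    ext t; simp [List.length_eq_zero_iff]; intro h; simp [h]]
  rw [tsum_singleton]
  rfl

lemma SD_zero (p : S → S → ℝ) (C : Set S) (a : S) : SD p C a 0 = 0 := by
  unfold SD
  rw [show {t : List S | t ∈ Stp C ∧ t.length = 0} = (∅ : Set (List S)) by
    ext t
    simp only [Set.mem_setOf_eq, Set.mem_empty_iff_false, iff_false, not_and, Stp]
    rintro ⟨z, hz, -⟩ hlen
    rw [List.length_eq_zero_iff.1 hlen] at hz
    simp at hz]
  exact tsum_empty

lemma partial_sum_eq (p : S → S → ℝ) (hp : ∀ x y, 0 ≤ p x y)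
    (hrow : ∀ x, ∑ y, p x y = 1) (C : Set S) (a : S) :
    ∀ n, (∑ k ∈ Finset.range (n + 1), SD p C a k) + SA p C a n = 1
  | 0 => by simp [SD_zero, SA_zero]
  | n + 1 => by
      rw [Finset.sum_range_succ, add_assoc, ← SA_step p hp hrow C a n]
      exact partial_sum_eq p hp hrow C a n

lemma stp_le_one (p : S → S → ℝ) (hp : ∀ x y, 0 ≤ p x y)
    (hrow : ∀ x, ∑ y, p x y = 1) (C : Set S) (a : S) :
    ∑' t : Stp C, w p a t ≤ 1 := by
  have hpart : (∑' t : Stp C, w p a t) = ∑' n, SD p C a n := by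
    rw [← (Equiv.sigmaFiberEquiv (fun t : Stp C => t.1.length)).tsum_eq
      (fun t : Stp C => w p a t.1), ENNReal.tsum_sigma']
    apply tsum_congr; intro n
    exact (Equiv.subtypeSubtypeEquivSubtypeInter (· ∈ Stp C) (fun t => t.length = n)).tsum_eq
      (fun t : {t : List S // t ∈ Stp C ∧ t.length = n} => w p a t.1)
  rw [hpart, ENNReal.tsum_eq_iSup_sum]
  apply iSup_le; intro s
  calc ∑ k ∈ s, SD p C a k ≤ ∑ k ∈ Finset.range (s.sup id + 1), SD p C a k := by
        apply Finset.sum_le_sum_of_subset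
        intro k hk
        exact Finset.mem_range.2 (Nat.lt_succ_of_le (Finset.le_sup (f := id) hk))
    _ ≤ 1 := by
        rw [← partial_sum_eq p hp hrow C a (s.sup id)]
        exact le_add_right le_rfl

lemma ee_le_one (p : S → S → ℝ) (hp : ∀ x y, 0 ≤ p x y)
    (hrow : ∀ x, ∑ y, p x y = 1) {C : Set S} {z : S} (hz : z ∉ C) (a : S) :
    ee p C a z ≤ 1 := by
  refine le_trans (tsum_set_mono ?_ (w p a)) (stp_le_one p hp hrow C a)
  intro t ht
  exact ⟨z, ht.1, hz, ht.2⟩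

lemma ee_ne_top (p : S → S → ℝ) (hp : ∀ x y, 0 ≤ p x y)
    (hrow : ∀ x, ∑ y, p x y = 1) {C : Set S} {z : S} (hz : z ∉ C) (a : S) :
    ee p C a z ≠ ⊤ :=
  ((ee_le_one p hp hrow hz a).trans_lt ENNReal.one_lt_top).ne

end ExitDecomp
end Stage3
section Stage4
set_option linter.unusedSectionVars false
open scoped ENNReal
namespace ExitDecomp

variable {S : Type*} [Fintype S] [DecidableEq S]

def headSigmaE (P : List S → Prop) (h : ∀ t, P t → t ≠ []) :
    (Σ b : S, {u : List S // P (b :: u)}) ≃ {t : List S // P t} where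
  toFun q := ⟨q.1 :: q.2.1, q.2.2⟩
  invFun t :=
    match t with
    | ⟨[], ht⟩ => absurd rfl (h _ ht)
    | ⟨b :: u, ht⟩ => ⟨b, u, ht⟩
  left_inv q := by rcases q with ⟨b, u, hu⟩; rfl
  right_inv t := by
    rcases t with ⟨t, ht⟩
    cases t with
    | nil => exact absurd rfl (h _ ht)
    | cons b u => rfl

lemma inner_tsum (p : S → S → ℝ) (C : Set S) {z : S} (hz : z ∉ C) (b : S) :
    (∑' u : {u : List S // (b :: u) ∈ ETl C z}, w p b u.1) =
      (if b = z then 1 else 0) + C.indicator (fun c => ee p C c z) b := by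
  classical
  by_cases hbz : b = z
  · subst hbz
    rw [if_pos rfl, Set.indicator_of_notMem hz, add_zero]
    have hmem : (b :: []) ∈ ETl C b := by simp [ETl]
    have huniq : ∀ u : {u : List S // (b :: u) ∈ ETl C b}, u = ⟨[], hmem⟩ := by
      rintro ⟨u, hu⟩
      apply Subtype.ext
      show u = []
      by_contra hne
      have : b ∈ (b :: u).dropLast := by
        rw [List.dropLast_cons_of_ne_nil hne]
        exact List.mem_cons_self
      exact hz (hu.2 b this)
    rw [tsum_eq_single (⟨[], hmem⟩ : {u : List S // (b :: u) ∈ ETl C b})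
      (fun u hu => absurd (huniq u) hu)]
    rfl
  · rw [if_neg hbz, zero_add]
    by_cases hbC : b ∈ C
    · rw [Set.indicator_of_mem hbC]
      have hiff : ∀ u : List S, ((b :: u) ∈ ETl C z) ↔ u ∈ ETl C z := by
        intro u
        cases u with
        | nil =>
          simp only [ETl, Set.mem_setOf_eq]
          constructor
          · rintro ⟨hgl, -⟩
            exact absurd (Option.some_injective _ hgl) hbz
          · rintro ⟨hgl, -⟩
            simp at hgl
        | cons c u' =>
          constructor
          · rintro ⟨hgl, hdl⟩
            refine ⟨by rwa [getLast?_cons_ne b (by simp)] at hgl, fun d hd => ?_⟩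
            apply hdl
            rw [List.dropLast_cons_of_ne_nil (by simp)]
            exact List.mem_cons_of_mem b hd
          · rintro ⟨hgl, hdl⟩
            refine ⟨by rwa [getLast?_cons_ne b (by simp)], fun d hd => ?_⟩
            rw [List.dropLast_cons_of_ne_nil (by simp)] at hd
            rcases List.mem_cons.1 hd with rfl | hd
            · exact hbC
            · exact hdl d hd
      exact (Equiv.subtypeEquivRight hiff).tsum_eq
        (fun u : {u : List S // u ∈ ETl C z} => w p b u.1)
    · rw [Set.indicator_of_notMem hbC]
      haveI : IsEmpty {u : List S // (b :: u) ∈ ETl C z} := by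
        constructor
        rintro ⟨u, hgl, hdl⟩
        cases u with
        | nil => exact hbz (Option.some_injective _ hgl)
        | cons c u' =>
          apply hbC
          apply hdl
          rw [List.dropLast_cons_of_ne_nil (by simp)]
          exact List.mem_cons_self
      exact tsum_empty

lemma first_step (p : S → S → ℝ) (C : Set S) {z : S} (hz : z ∉ C) (a : S) :
    ee p C a z = ENNReal.ofReal (p a z) +
      ∑ b : S, ENNReal.ofReal (p a b) * C.indicator (fun c => ee p C c z) b := by
  classical
  have e0 := (headSigmaE (fun t => t ∈ ETl C z) (fun t h => etl_ne_nil h)).tsum_eq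
    (fun t : {t : List S // t ∈ ETl C z} => w p a t.1)
  calc ee p C a z
      = ∑' q : Σ b : S, {u : List S // (b :: u) ∈ ETl C z}, w p a (q.1 :: q.2.1) := e0.symm
    _ = ∑' b : S, ∑' u : {u : List S // (b :: u) ∈ ETl C z}, w p a (b :: u.1) :=
        ENNReal.tsum_sigma' _
    _ = ∑' b : S, ENNReal.ofReal (p a b) *
          ∑' u : {u : List S // (b :: u) ∈ ETl C z}, w p b u.1 := by
        apply tsum_congr; intro b
        rw [← ENNReal.tsum_mul_left]
        exact tsum_congr fun u => rfl
    _ = ∑ b : S, ENNReal.ofReal (p a b) *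
          ((if b = z then 1 else 0) + C.indicator (fun c => ee p C c z) b) := by
        rw [tsum_fintype]
        exact Finset.sum_congr rfl fun b _ => by rw [inner_tsum p C hz b]
    _ = ENNReal.ofReal (p a z) +
          ∑ b : S, ENNReal.ofReal (p a b) * C.indicator (fun c => ee p C c z) b := by
        have hcongr : (∑ b : S, ENNReal.ofReal (p a b) *
            ((if b = z then 1 else 0) + C.indicator (fun c => ee p C c z) b)) =
            ∑ b : S, ((if b = z then ENNReal.ofReal (p a z) else 0) +
            ENNReal.ofReal (p a b) * C.indicator (fun c => ee p C c z) b) :=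
          Finset.sum_congr rfl fun b _ => by by_cases hbz : b = z <;> simp [hbz, mul_add]
        rw [hcongr, Finset.sum_add_distrib, Finset.sum_ite_eq' Finset.univ z
          (fun _ => ENNReal.ofReal (p a z))]
        simp

lemma ETl_diff_eq (C : Set S) {x y : S} (hxy : x ≠ y) :
    {t | t ∈ ETl C y ∧ x ∉ t} = ETl (C \ {x}) y := by
  ext t
  constructor
  · rintro ⟨⟨hgl, hdl⟩, hxt⟩
    exact ⟨hgl, fun c hc => ⟨hdl c hc, by
      simp only [Set.mem_singleton_iff]
      rintro rfl
      exact hxt (List.dropLast_subset _ hc)⟩⟩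
  · rintro ⟨hgl, hdl⟩
    refine ⟨⟨hgl, fun c hc => (hdl c hc).1⟩, fun hxt => ?_⟩
    have ht := eq_dropLast_concat hgl
    rw [ht] at hxt
    rcases List.mem_append.1 hxt with hc | hc
    · exact (hdl x hc).2 rfl
    · exact hxy (List.mem_singleton.1 hc)

lemma split_at (p : S → S → ℝ) (C : Set S) {x y : S} (hx : x ∈ C) (hy : y ∉ C)
    (a : S) :
    ee p C a y = ee p (C \ {x}) a y + ee p (C \ {x}) a x * ee p C x y := by
  classical
  have hxy : x ≠ y := fun e => hy (e ▸ hx)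
  show (∑' t : ETl C y, w p a ↑t) = _
  rw [tsum_set_split (ETl C y) (fun t => x ∉ t) (w p a)]
  congr 1
  · exact tsum_eq_of_set_eq (ETl_diff_eq C hxy) (w p a)
  · rw [tsum_eq_of_set_eq (show {t | t ∈ ETl C y ∧ ¬ x ∉ t} = {t | t ∈ ETl C y ∧ x ∈ t}
      from by ext t; simp [not_not]) (w p a)]
    let E := splitE x (fun t => t ∈ ETl C y ∧ x ∈ t)
      (fun s => ∀ c ∈ s, c ∈ C ∧ c ≠ x) (fun u => u ∈ ETl C y)
      (fun s hs hm => (hs x hm).2 rfl)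
      (fun s u hQ hR => ⟨mem_ETl_append hx hQ hR, by simp⟩)
      (fun γ h => h.2)
      (fun s u hxs hP => ETl_append hxy hxs hP.1)
    have e1 := E.symm.tsum_eq (fun t : {t : List S // t ∈ ETl C y ∧ x ∈ t} => w p a t.1)
    calc (∑' t : {t | t ∈ ETl C y ∧ x ∈ t}, w p a ↑t)
        = ∑' q : {s : List S // ∀ c ∈ s, c ∈ C ∧ c ≠ x} × {u : List S // u ∈ ETl C y},
            w p a (q.1.1 ++ x :: q.2.1) := e1.symm
      _ = ∑' q : {s : List S // ∀ c ∈ s, c ∈ C ∧ c ≠ x} × {u : List S // u ∈ ETl C y},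
            w p a (q.1.1 ++ [x]) * w p x q.2.1 := by
          apply tsum_congr; intro q
          exact w_append p x q.1.1 a q.2.1
      _ = ∑' s : {s : List S // ∀ c ∈ s, c ∈ C ∧ c ≠ x},
            ∑' u : {u : List S // u ∈ ETl C y}, w p a (s.1 ++ [x]) * w p x u.1 := by
          rw [ENNReal.tsum_prod']
      _ = ∑' s : {s : List S // ∀ c ∈ s, c ∈ C ∧ c ≠ x},
            w p a (s.1 ++ [x]) * ∑' u : {u : List S // u ∈ ETl C y}, w p x u.1 :=
          tsum_congr fun s => ENNReal.tsum_mul_left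
      _ = (∑' s : {s : List S // ∀ c ∈ s, c ∈ C ∧ c ≠ x}, w p a (s.1 ++ [x])) *
            ∑' u : {u : List S // u ∈ ETl C y}, w p x u.1 := ENNReal.tsum_mul_right
      _ = ee p (C \ {x}) a x * ee p C x y := by
          congr 1
          let E2 := snocE x (fun v => v ∈ ETl (C \ {x}) x)
            (fun s => ∀ c ∈ s, c ∈ C ∧ c ≠ x)
            (fun s hs => ⟨List.getLast?_concat, by
              rw [List.dropLast_concat]
              exact fun c hc => ⟨(hs c hc).1, by simp [(hs c hc).2]⟩⟩)
            (fun v hv => ⟨v.dropLast, eq_dropLast_concat hv.1, by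
              intro c hc
              rcases hv.2 c hc with ⟨hcC, hcx⟩
              exact ⟨hcC, by simpa using hcx⟩⟩)
          exact E2.tsum_eq (fun v : {v : List S // v ∈ ETl (C \ {x}) x} => w p a v.1)

lemma escape_pos (p : S → S → ℝ) (C : Set S) {x y : S} (hxy : x ≠ y) :
    ∀ (n : ℕ) (t : List S), t.length ≤ n → t ∈ ETl C y → w p x t ≠ 0 →
      ∃ u, u ∈ ETl (C \ {x}) y ∧ w p x u ≠ 0
  | 0, t, hlen, hET, _ =>
      absurd (List.length_eq_zero_iff.1 (Nat.le_zero.1 hlen)) (etl_ne_nil hET)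
  | n + 1, t, hlen, hET, hw => by
      by_cases hxt : x ∈ t
      · have hspec := sp_spec x t hxt
        have hxs : x ∉ (sp x t).1 := sp_not_mem x t
        have h3 := ETl_append hxy hxs (hspec ▸ hET)
        have hwsplit : w p x t = w p x ((sp x t).1 ++ [x]) * w p x (sp x t).2 := by
          conv_lhs => rw [hspec]
          exact w_append p x (sp x t).1 x (sp x t).2
        have hwu : w p x (sp x t).2 ≠ 0 := fun h0 => hw (by rw [hwsplit, h0, mul_zero])
        have hlu : (sp x t).2.length ≤ n := by
          have := congrArg List.length hspec
          simp only [List.length_append, List.length_cons] at this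
          omega
        exact escape_pos p C hxy n (sp x t).2 hlu h3.2 hwu
      · exact ⟨t, (ETl_diff_eq C hxy) ▸ ⟨hET, hxt⟩, hw⟩

end ExitDecomp
end Stage4
section Stage5
set_option linter.unusedSectionVars false
open scoped ENNReal
namespace ExitDecomp

variable {S : Type*} [Fintype S] [DecidableEq S]

lemma exitProb_eq (p : S → S → ℝ) (hp : ∀ x y, 0 ≤ p x y) (A : Set S) {x : S}
    (y : S) (hx : x ∈ A) :
    exitProb p A x y = (ee p A x y).toReal := by
  let e := consE x
    (fun γ : List S => γ.head? = some x ∧ γ.getLast? = some y ∧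
      2 ≤ γ.length ∧ ∀ z ∈ γ.dropLast, z ∈ A)
    (fun t => t ∈ ETl A y)
    (by
      intro t ht
      have hne : t ≠ [] := etl_ne_nil ht
      refine ⟨rfl, by rw [getLast?_cons_ne x hne]; exact ht.1, ?_, ?_⟩
      · have := List.length_pos_iff.2 hne
        simp only [List.length_cons]
        omega
      · intro z hz
        rw [List.dropLast_cons_of_ne_nil hne] at hz
        rcases List.mem_cons.1 hz with rfl | hz
        · exact hx
        · exact ht.2 z hz)
    (by
      rintro γ ⟨hh, hgl, hlen, hdl⟩
      cases γ with
      | nil => simp at hh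
      | cons c t =>
        have hc : c = x := by simpa using hh
        subst hc
        have hne : t ≠ [] := by
          rintro rfl; simp at hlen
        refine ⟨t, rfl, by rwa [getLast?_cons_ne c hne] at hgl, ?_⟩
        intro z hz
        apply hdl
        rw [List.dropLast_cons_of_ne_nil hne]
        exact List.mem_cons_of_mem c hz)
  have e1 := e.tsum_eq (fun γ : {γ : List S // γ.head? = some x ∧ γ.getLast? = some y ∧
      2 ≤ γ.length ∧ ∀ z ∈ γ.dropLast, z ∈ A} => pathProb p γ.1)
  calc exitProb p A x y
      = ∑' t : {t : List S // t ∈ ETl A y}, pathProb p (x :: t.1) := e1.symm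
    _ = ∑' t : {t : List S // t ∈ ETl A y}, (w p x t.1).toReal := by
        apply tsum_congr; intro t
        rw [w_eq p hp, ENNReal.toReal_ofReal (pathProb_nonneg p hp _)]
    _ = (ee p A x y).toReal :=
        (ENNReal.tsum_toReal_eq (fun t : ↑(ETl A y) => w_ne_top p x t.1)).symm

lemma returnAvoid_eq (p : S → S → ℝ) (hp : ∀ x y, 0 ≤ p x y) (B : Set S) (z : S) :
    returnAvoid p B z = (ee p Bᶜ z z).toReal := by
  let e := consE z
    (fun γ : List S => γ.head? = some z ∧ γ.getLast? = some z ∧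
      2 ≤ γ.length ∧ ∀ w ∈ (γ.drop 1).dropLast, w ∉ B)
    (fun t => t ∈ ETl Bᶜ z)
    (by
      intro t ht
      have hne : t ≠ [] := etl_ne_nil ht
      refine ⟨rfl, by rw [getLast?_cons_ne z hne]; exact ht.1, ?_, ?_⟩
      · have := List.length_pos_iff.2 hne
        simp only [List.length_cons]
        omega
      · intro c hc
        simp only [List.drop_succ_cons, List.drop_zero] at hc
        exact ht.2 c hc)
    (by
      rintro γ ⟨hh, hgl, hlen, hdl⟩
      cases γ with
      | nil => simp at hh
      | cons c t =>
        have hc : c = z := by simpa using hh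
        subst hc
        have hne : t ≠ [] := by rintro rfl; simp at hlen
        refine ⟨t, rfl, by rwa [getLast?_cons_ne c hne] at hgl, ?_⟩
        intro w hw
        apply hdl
        simpa using hw)
  have e1 := e.tsum_eq (fun γ : {γ : List S // γ.head? = some z ∧ γ.getLast? = some z ∧
      2 ≤ γ.length ∧ ∀ w ∈ (γ.drop 1).dropLast, w ∉ B} => pathProb p γ.1)
  calc returnAvoid p B z
      = ∑' t : {t : List S // t ∈ ETl Bᶜ z}, pathProb p (z :: t.1) := e1.symm
    _ = ∑' t : {t : List S // t ∈ ETl Bᶜ z}, (w p z t.1).toReal := by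
        apply tsum_congr; intro t
        rw [w_eq p hp, ENNReal.toReal_ofReal (pathProb_nonneg p hp _)]
    _ = (ee p Bᶜ z z).toReal :=
        (ENNReal.tsum_toReal_eq (fun t : ↑(ETl Bᶜ z) => w_ne_top p z t.1)).symm

lemma hexit_EN (p : S → S → ℝ) (hp : ∀ x y, 0 ≤ p x y) (hrow : ∀ x, ∑ y, p x y = 1)
    (A : Finset S)
    (hexit : ∀ a ∈ A, ∑ b ∈ Finset.univ.filter (· ∉ A), exitProb p (↑A) a b = 1)
    (a : S) (ha : a ∈ A) :
    ∑ b ∈ Finset.univ.filter (· ∉ A), ee p (↑A) a b = 1 := by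
  have hne : ∀ b ∈ Finset.univ.filter (· ∉ A), ee p (↑A) a b ≠ ⊤ := by
    intro b hb
    exact ee_ne_top p hp hrow (by simpa using (Finset.mem_filter.1 hb).2) a
  have htR : (∑ b ∈ Finset.univ.filter (· ∉ A), ee p (↑A) a b).toReal = 1 := by
    rw [ENNReal.toReal_sum hne, ← hexit a ha]
    exact Finset.sum_congr rfl fun b _ => (exitProb_eq p hp (↑A) b ha).symm
  have hsne : (∑ b ∈ Finset.univ.filter (· ∉ A), ee p (↑A) a b) ≠ ⊤ := by
    rw [← lt_top_iff_ne_top]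
    exact ENNReal.sum_lt_top.2 fun b hb => lt_top_iff_ne_top.2 (hne b hb)
  exact (ENNReal.toReal_eq_toReal_iff' hsne ENNReal.one_ne_top).1
    (by rw [htR, ENNReal.toReal_one])

lemma R_lt_one (p : S → S → ℝ) (hp : ∀ x y, 0 ≤ p x y) (hrow : ∀ x, ∑ y, p x y = 1)
    (A : Finset S)
    (HEN : ∀ a ∈ A, ∑ b ∈ Finset.univ.filter (· ∉ A), ee p (↑A) a b = 1)
    {x : S} (hx : x ∈ A) :
    ee p ((↑A : Set S) \ {x}) x x < 1 := by
  have hxA : x ∈ (↑A : Set S) := hx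
  have hsum : (1 : ℝ≥0∞) =
      (∑ y ∈ Finset.univ.filter (· ∉ A), ee p ((↑A : Set S) \ {x}) x y) +
      ee p ((↑A : Set S) \ {x}) x x * 1 := by
    conv_lhs => rw [← HEN x hx]
    rw [show (∑ y ∈ Finset.univ.filter (· ∉ A), ee p (↑A) x y) =
        ∑ y ∈ Finset.univ.filter (· ∉ A), (ee p ((↑A : Set S) \ {x}) x y +
          ee p ((↑A : Set S) \ {x}) x x * ee p (↑A) x y) from
      Finset.sum_congr rfl fun y hy =>
        split_at p (↑A) hxA (by simpa using (Finset.mem_filter.1 hy).2) x]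
    rw [Finset.sum_add_distrib, ← Finset.mul_sum, HEN x hx]
  set T := ∑ y ∈ Finset.univ.filter (· ∉ A), ee p ((↑A : Set S) \ {x}) x y with hT
  set R := ee p ((↑A : Set S) \ {x}) x x with hR
  have hRle : R ≤ 1 := by
    rw [hsum, mul_one]
    exact le_add_self
  rcases eq_or_lt_of_le hRle with hReq | hlt
  · exfalso
    have hT0 : T = 0 := by
      have h1 : T + 1 = 1 := by
        conv_rhs => rw [hsum, hReq, mul_one]
      exact WithTop.add_right_cancel ENNReal.one_ne_top
        (by rw [h1, zero_add] : T + 1 = 0 + 1)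
    -- find a positive escape path
    have h1 : ∃ y ∈ Finset.univ.filter (· ∉ A), ee p (↑A) x y ≠ 0 := by
      by_contra hc
      push_neg at hc
      have : (∑ y ∈ Finset.univ.filter (· ∉ A), ee p (↑A) x y) = 0 :=
        Finset.sum_eq_zero fun y hy => hc y hy
      rw [HEN x hx] at this
      exact one_ne_zero this
    obtain ⟨y, hy, hone⟩ := h1
    have hyA : y ∉ (↑A : Set S) := by simpa using (Finset.mem_filter.1 hy).2
    have hxy : x ≠ y := fun e => hyA (e ▸ hxA)
    obtain ⟨t, ht⟩ : ∃ t : ETl (↑A : Set S) y, w p x t.1 ≠ 0 := by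
      by_contra hc
      push_neg at hc
      exact hone (ENNReal.tsum_eq_zero.2 hc)
    obtain ⟨u, hu, hwu⟩ := escape_pos p (↑A) hxy t.1.length t.1 le_rfl t.2 ht
    have : ee p ((↑A : Set S) \ {x}) x y = 0 := by
      have := Finset.sum_eq_zero_iff.1 hT0 y hy
      exact this
    exact hwu (ENNReal.tsum_eq_zero.1 this ⟨u, hu⟩)
  · exact hlt

end ExitDecomp
end Stage5
section Stage6
set_option linter.unusedSectionVars false
open scoped ENNReal Classical
namespace ExitDecomp

variable {S : Type*} [Fintype S] [DecidableEq S]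

lemma pos_of_mul {a b : ℝ} (ha : 0 ≤ a) (hb : 0 ≤ b) (h : 0 < a * b) :
    0 < a ∧ 0 < b := by
  refine ⟨ha.lt_of_ne fun e => ?_, hb.lt_of_ne fun e => ?_⟩
  · rw [← e, zero_mul] at h; exact lt_irrefl 0 h
  · rw [← e, mul_zero] at h; exact lt_irrefl 0 h

lemma not_mem_of_parts {l : List S} {x : S} (h1 : ∀ c ∈ l.dropLast, c ≠ x)
    (h2 : ∀ z, l.getLast? = some z → z ≠ x) : x ∉ l := by
  intro hm
  have hne : l ≠ [] := List.ne_nil_of_mem hm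
  rw [← List.dropLast_append_getLast hne] at hm
  rcases List.mem_append.1 hm with h | h
  · exact h1 x h rfl
  · exact absurd (List.mem_singleton.1 h).symm
      (h2 _ (List.getLast?_eq_getLast_of_ne_nil hne))

lemma finite_simple (p : S → S → ℝ) (A : Set S) (x y : S) :
    Finite {γ : List S // SimplePathIn A x y γ ∧ 0 < pathProb p γ} := by
  have hsub : {γ : List S | SimplePathIn A x y γ ∧ 0 < pathProb p γ} ⊆
      {l : List S | l.length ≤ Fintype.card S} := fun γ h => h.1.2.2.2.1.length_le_card
  exact ((List.finite_length_le S (Fintype.card S)).subset hsub).to_subtype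

lemma rhsProd_erase (p : S → S → ℝ) (C : Set S) (c : S) :
    ∀ (γ pref : List S), rhsProd p C (c :: pref) γ = rhsProd p (C \ {c}) pref γ
  | [], _ => by simp [rhsProd]
  | [a], _ => by simp [rhsProd]
  | a :: b :: l, pref => by
      simp only [rhsProd]
      have hset : {z | z ∉ C ∨ z ∈ (c :: pref) ++ [a]} =
          {z | z ∉ C \ {c} ∨ z ∈ pref ++ [a]} := by
        ext z
        simp only [Set.mem_setOf_eq, Set.mem_diff, Set.mem_singleton_iff,
          List.cons_append, List.mem_cons, not_and, not_not]
        constructor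
        · rintro (h | h | h)
          · exact Or.inl fun hz => absurd hz h
          · exact Or.inl fun _ => h
          · exact Or.inr h
        · rintro (h | h)
          · by_cases hz : z ∈ C
            · exact Or.inr (Or.inl (h hz))
            · exact Or.inl hz
          · exact Or.inr (Or.inr h)
      rw [hset, show (c :: pref) ++ [a] = c :: (pref ++ [a]) from rfl,
        rhsProd_erase p C c (b :: l) (pref ++ [a])]

lemma rhsProd_unfold (p : S → S → ℝ) (A : Set S) (x b : S) (l : List S) :
    rhsProd p A [] (x :: b :: l) =
      (p x b / (1 - returnAvoid p {z | z ∉ A ∨ z ∈ ([x] : List S)} x)) *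
        rhsProd p (A \ {x}) [] (b :: l) := by
  simp only [rhsProd, List.nil_append]
  rw [show ([x] : List S) = x :: [] from rfl, rhsProd_erase]

lemma rhs_sum (p : S → S → ℝ) (hp : ∀ x y, 0 ≤ p x y) (A : Set S) {x y : S}
    (hx : x ∈ A) (hy : y ∉ A) :
    (∑' γ : {γ : List S // SimplePathIn A x y γ ∧ 0 < pathProb p γ},
        rhsProd p A [] γ.1)
      = p x y / (1 - returnAvoid p {z | z ∉ A ∨ z ∈ ([x] : List S)} x)
        + ∑ b : S, (if b ∈ A ∧ b ≠ x then
            (p x b / (1 - returnAvoid p {z | z ∉ A ∨ z ∈ ([x] : List S)} x)) *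
              ∑' δ : {δ : List S // SimplePathIn (A \ {x}) b y δ ∧ 0 < pathProb p δ},
                rhsProd p (A \ {x}) [] δ.1
          else 0) := by
  classical
  have hxy : x ≠ y := fun e => hy (e ▸ hx)
  set q0 : ℝ := 1 - returnAvoid p {z | z ∉ A ∨ z ∈ ([x] : List S)} x with hq0
  haveI hfin : Finite {γ : List S // SimplePathIn A x y γ ∧ 0 < pathProb p γ} :=
    finite_simple p A x y
  let e1 := consE x (fun γ : List S => SimplePathIn A x y γ ∧ 0 < pathProb p γ)
    (fun δ => SimplePathIn A x y (x :: δ) ∧ 0 < pathProb p (x :: δ))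
    (fun δ h => h)
    (by
      rintro γ ⟨hsp, hpos⟩
      obtain ⟨hh, hrest⟩ := hsp
      cases γ with
      | nil => simp at hh
      | cons c δ =>
        have hc : c = x := by simpa using hh
        subst hc
        exact ⟨δ, rfl, ⟨hh, hrest⟩, hpos⟩)
  haveI hfin2 : Finite {δ : List S //
      SimplePathIn A x y (x :: δ) ∧ 0 < pathProb p (x :: δ)} :=
    Finite.of_equiv _ e1.symm
  let e2 := headSigmaE
    (fun δ => SimplePathIn A x y (x :: δ) ∧ 0 < pathProb p (x :: δ))
    (by
      rintro δ h rfl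
      have := h.1.2.2.1
      simp at this)
  haveI hfin3 : Finite (Σ b : S, {l : List S //
      SimplePathIn A x y (x :: b :: l) ∧ 0 < pathProb p (x :: b :: l)}) :=
    Finite.of_equiv _ e2.symm
  have hv : ∀ b : S,
      (∑' l : {l : List S // SimplePathIn A x y (x :: b :: l) ∧
          0 < pathProb p (x :: b :: l)}, rhsProd p A [] (x :: b :: l.1)) =
      (if b = y then p x y / q0 else 0) +
      (if b ∈ A ∧ b ≠ x then (p x b / q0) *
          ∑' δ : {δ : List S // SimplePathIn (A \ {x}) b y δ ∧ 0 < pathProb p δ},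
            rhsProd p (A \ {x}) [] δ.1
        else 0) := by
    intro b
    by_cases hby : b = y
    · subst hby
      rw [if_pos rfl, if_neg (fun h => hy h.1), add_zero]
      by_cases hpxy : 0 < p x b
      · have hQ : SimplePathIn A x b (x :: b :: []) ∧ 0 < pathProb p (x :: b :: []) := by
          constructor
          · exact ⟨rfl, by simp, by simp, by simp [hxy], by simp⟩
          · show 0 < p x b * pathProb p [b]
            simpa [pathProb] using hpxy
        have huniq : ∀ u : {l : List S // SimplePathIn A x b (x :: b :: l) ∧
            0 < pathProb p (x :: b :: l)}, u = ⟨[], hQ⟩ := by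
          rintro ⟨l, hQl⟩
          apply Subtype.ext
          show l = []
          by_contra hne
          have hmem : b ∈ ((x :: b :: l).drop 1).dropLast := by
            simp only [List.drop_succ_cons, List.drop_zero]
            rw [List.dropLast_cons_of_ne_nil hne]
            exact List.mem_cons_self
          exact hy (hQl.1.2.2.2.2 b hmem)
        rw [tsum_eq_single (⟨[], hQ⟩ : {l : List S // SimplePathIn A x b (x :: b :: l) ∧
            0 < pathProb p (x :: b :: l)}) (fun u hu => absurd (huniq u) hu)]
        rw [rhsProd_unfold]
        show p x b / q0 * rhsProd p (A \ {x}) [] [b] = p x b / q0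
        rw [show rhsProd p (A \ {x}) [] [b] = 1 from rfl, mul_one]
      · have h0 : p x b = 0 := le_antisymm (not_lt.1 hpxy) (hp x b)
        haveI : IsEmpty {l : List S // SimplePathIn A x b (x :: b :: l) ∧
            0 < pathProb p (x :: b :: l)} := by
          constructor
          rintro ⟨l, -, hpos⟩
          rw [show pathProb p (x :: b :: l) = p x b * pathProb p (b :: l) from rfl,
            h0, zero_mul] at hpos
          exact lt_irrefl 0 hpos
        rw [tsum_empty, h0, zero_div]
    · rw [if_neg hby, zero_add]
      by_cases hbA : b ∈ A ∧ b ≠ x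
      · rw [if_pos hbA]
        have hval : ∀ l : {l : List S // SimplePathIn A x y (x :: b :: l) ∧
            0 < pathProb p (x :: b :: l)},
            rhsProd p A [] (x :: b :: l.1) =
              (p x b / q0) * rhsProd p (A \ {x}) [] (b :: l.1) :=
          fun l => rhsProd_unfold p A x b l.1
        rw [tsum_congr hval, tsum_mul_left]
        by_cases hpxb : 0 < p x b
        · congr 1
          let e3 := consE b
            (fun δ : List S => SimplePathIn (A \ {x}) b y δ ∧ 0 < pathProb p δ)
            (fun l => SimplePathIn A x y (x :: b :: l) ∧ 0 < pathProb p (x :: b :: l))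
            (by
              rintro l ⟨hsp, hpos⟩
              obtain ⟨hh, hgl, hlen, hnd, hint⟩ := hsp
              have hpos' : 0 < pathProb p (b :: l) :=
                (pos_of_mul (hp x b) (pathProb_nonneg p hp _)
                  (by rwa [show pathProb p (x :: b :: l) =
                    p x b * pathProb p (b :: l) from rfl] at hpos)).2
              have hlne : l ≠ [] := by
                rintro rfl
                simp only [List.getLast?_cons_cons] at hgl
                exact hby (by simpa using hgl)
              refine ⟨⟨rfl, ?_, ?_, hnd.of_cons, ?_⟩, hpos'⟩
              · simpa using hgl
              · simp only [List.length_cons]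
                have := List.length_pos_iff.2 hlne
                omega
              · intro z hz
                simp only [List.drop_succ_cons, List.drop_zero] at hz
                have hzl : z ∈ l := List.dropLast_subset _ hz
                have hzA : z ∈ A := by
                  apply hint
                  simp only [List.drop_succ_cons, List.drop_zero]
                  rw [List.dropLast_cons_of_ne_nil hlne]
                  exact List.mem_cons_of_mem b hz
                refine ⟨hzA, ?_⟩
                simp only [Set.mem_singleton_iff]
                rintro rfl
                exact (List.nodup_cons.1 hnd).1 (List.mem_cons_of_mem b hzl))
            (by
              rintro δ ⟨hsp, hpos⟩
              obtain ⟨hh, hgl, hlen, hnd, hint⟩ := hsp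
              cases δ with
              | nil => simp at hh
              | cons c l =>
                have hc : c = b := by simpa using hh
                subst hc
                have hlne : l ≠ [] := by
                  rintro rfl
                  simp at hlen
                have hgll : l.getLast? = some y := by
                  rwa [getLast?_cons_ne c hlne] at hgl
                have hxnl : x ∉ l := by
                  apply not_mem_of_parts
                  · intro d hd
                    have : d ∈ A \ {x} := by
                      apply hint
                      simpa using hd
                    simpa using fun e => this.2 e
                  · intro z hz
                    rw [hgll] at hz
                    have hzy : y = z := by simpa using hz
                    rw [← hzy]
                    exact fun e => hxy e.symm
                refine ⟨l, rfl, ⟨rfl, by simpa using hgl, by simp, ?_, ?_⟩, ?_⟩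
                · rw [List.nodup_cons]
                  refine ⟨?_, hnd⟩
                  simp only [List.mem_cons]
                  rintro (rfl | hxl)
                  · exact hbA.2 rfl
                  · exact hxnl hxl
                · intro z hz
                  simp only [List.drop_succ_cons, List.drop_zero] at hz
                  rw [List.dropLast_cons_of_ne_nil hlne] at hz
                  rcases List.mem_cons.1 hz with rfl | hz
                  · exact hbA.1
                  · have : z ∈ A \ {x} := by
                      apply hint
                      simpa using hz
                    exact this.1
                · rw [show pathProb p (x :: c :: l) = p x c * pathProb p (c :: l)
                    from rfl]
                  exact mul_pos hpxb hpos)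
          exact e3.tsum_eq
            (fun δ : {δ : List S // SimplePathIn (A \ {x}) b y δ ∧ 0 < pathProb p δ}
              => rhsProd p (A \ {x}) [] δ.1)
        · have h0 : p x b = 0 := le_antisymm (not_lt.1 hpxb) (hp x b)
          haveI : IsEmpty {l : List S // SimplePathIn A x y (x :: b :: l) ∧
              0 < pathProb p (x :: b :: l)} := by
            constructor
            rintro ⟨l, -, hpos⟩
            rw [show pathProb p (x :: b :: l) = p x b * pathProb p (b :: l) from rfl,
              h0, zero_mul] at hpos
            exact lt_irrefl 0 hpos
          rw [tsum_empty, h0, zero_div, zero_mul, zero_mul]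
      · rw [if_neg hbA]
        haveI : IsEmpty {l : List S // SimplePathIn A x y (x :: b :: l) ∧
            0 < pathProb p (x :: b :: l)} := by
          constructor
          rintro ⟨l, hsp, hpos⟩
          obtain ⟨hh, hgl, hlen, hnd, hint⟩ := hsp
          push_neg at hbA
          cases l with
          | nil =>
            simp only [List.getLast?_cons_cons] at hgl
            exact hby (by simpa using hgl)
          | cons c l' =>
            have hbmem : b ∈ ((x :: b :: c :: l').drop 1).dropLast := by
              simp only [List.drop_succ_cons, List.drop_zero]
              rw [List.dropLast_cons_of_ne_nil (by simp : (c :: l') ≠ [])]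
              exact List.mem_cons_self
            have hbA' : b ∈ A := hint b hbmem
            have : b = x := hbA hbA'
            subst this
            exact (List.nodup_cons.1 hnd).1 (List.mem_cons_self)
        exact tsum_empty
  calc (∑' γ : {γ : List S // SimplePathIn A x y γ ∧ 0 < pathProb p γ},
      rhsProd p A [] γ.1)
      = ∑' δ : {δ : List S // SimplePathIn A x y (x :: δ) ∧ 0 < pathProb p (x :: δ)},
          rhsProd p A [] (x :: δ.1) :=
        (e1.tsum_eq (fun γ : {γ : List S // SimplePathIn A x y γ ∧
          0 < pathProb p γ} => rhsProd p A [] γ.1)).symm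
    _ = ∑' qq : Σ b : S, {l : List S // SimplePathIn A x y (x :: b :: l) ∧
          0 < pathProb p (x :: b :: l)}, rhsProd p A [] (x :: qq.1 :: qq.2.1) :=
        (e2.tsum_eq (fun δ : {δ : List S // SimplePathIn A x y (x :: δ) ∧
          0 < pathProb p (x :: δ)} => rhsProd p A [] (x :: δ.1))).symm
    _ = ∑' b : S, ∑' l : {l : List S // SimplePathIn A x y (x :: b :: l) ∧
          0 < pathProb p (x :: b :: l)}, rhsProd p A [] (x :: b :: l.1) :=
        Summable.tsum_sigma Summable.of_finite
    _ = ∑ b : S, ∑' l : {l : List S // SimplePathIn A x y (x :: b :: l) ∧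
          0 < pathProb p (x :: b :: l)}, rhsProd p A [] (x :: b :: l.1) :=
        tsum_fintype _
    _ = ∑ b : S, ((if b = y then p x y / q0 else 0) +
          (if b ∈ A ∧ b ≠ x then (p x b / q0) *
            ∑' δ : {δ : List S // SimplePathIn (A \ {x}) b y δ ∧ 0 < pathProb p δ},
              rhsProd p (A \ {x}) [] δ.1
          else 0)) := Finset.sum_congr rfl fun b _ => hv b
    _ = p x y / q0 + ∑ b : S, (if b ∈ A ∧ b ≠ x then (p x b / q0) *
          ∑' δ : {δ : List S // SimplePathIn (A \ {x}) b y δ ∧ 0 < pathProb p δ},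
            rhsProd p (A \ {x}) [] δ.1
        else 0) := by
        rw [Finset.sum_add_distrib]
        congr 1
        rw [Finset.sum_ite_eq' Finset.univ y (fun _ => p x y / q0)]
        simp

end ExitDecomp
end Stage6
section Stage7
set_option linter.unusedSectionVars false
set_option maxHeartbeats 1000000
open scoped ENNReal Classical
namespace ExitDecomp

variable {S : Type*} [Fintype S] [DecidableEq S]

lemma HEN_erase (p : S → S → ℝ) (A : Finset S)
    (HEN : ∀ a ∈ A, ∑ b ∈ Finset.univ.filter (· ∉ A), ee p (↑A) a b = 1)
    {x : S} (hx : x ∈ A) :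
    ∀ a ∈ A.erase x,
      ∑ b ∈ Finset.univ.filter (· ∉ A.erase x), ee p (↑(A.erase x)) a b = 1 := by
  intro a ha
  have hxA : x ∈ (↑A : Set S) := hx
  have hcoe : ((A.erase x : Finset S) : Set S) = (↑A : Set S) \ {x} :=
    Finset.coe_erase x A
  have hfilter : Finset.univ.filter (· ∉ A.erase x) =
      insert x (Finset.univ.filter (· ∉ A)) := by
    ext b
    simp only [Finset.mem_filter, Finset.mem_univ, true_and, Finset.mem_insert,
      Finset.mem_erase, not_and]
    constructor
    · intro h
      by_cases hbx : b = x
      · exact Or.inl hbx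
      · exact Or.inr (h hbx)
    · rintro (rfl | h)
      · intro h; exact absurd rfl h
      · intro _; exact h
  have hxnot : x ∉ Finset.univ.filter (· ∉ A) := by simp [hx]
  rw [hfilter, Finset.sum_insert hxnot, hcoe]
  have hsplit : ∀ b ∈ Finset.univ.filter (· ∉ A),
      ee p (↑A) a b = ee p ((↑A : Set S) \ {x}) a b +
        ee p ((↑A : Set S) \ {x}) a x * ee p (↑A) x b := fun b hb =>
    split_at p (↑A) hxA (by simpa using (Finset.mem_filter.1 hb).2) a
  have h1 : (1 : ℝ≥0∞) =
      (∑ b ∈ Finset.univ.filter (· ∉ A), ee p ((↑A : Set S) \ {x}) a b) +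
        ee p ((↑A : Set S) \ {x}) a x := by
    conv_lhs => rw [← HEN a (Finset.mem_of_mem_erase ha)]
    rw [Finset.sum_congr rfl hsplit, Finset.sum_add_distrib, ← Finset.mul_sum,
      HEN x hx, mul_one]
  rw [add_comm]
  exact h1.symm

lemma main_aux (p : S → S → ℝ) (hp : ∀ x y, 0 ≤ p x y)
    (hrow : ∀ x, ∑ y, p x y = 1) :
    ∀ (n : ℕ) (A : Finset S), A.card ≤ n →
      (∀ a ∈ A, ∑ b ∈ Finset.univ.filter (· ∉ A), ee p (↑A) a b = 1) →
      ∀ x, x ∈ A → ∀ y, y ∉ A →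
      (ee p (↑A : Set S) x y).toReal =
        ∑' γ : {γ : List S // SimplePathIn (↑A : Set S) x y γ ∧ 0 < pathProb p γ},
          rhsProd p (↑A : Set S) [] γ.1 := by
  intro n
  induction n with
  | zero =>
    intro A hcard _ x hx y _
    rw [Finset.card_eq_zero.1 (Nat.le_zero.1 hcard)] at hx
    simp at hx
  | succ n IH =>
    intro A hcard HEN x hx y hy
    have hxA : x ∈ (↑A : Set S) := hx
    have hyA : y ∉ (↑A : Set S) := by simpa using hy
    set A' : Set S := (↑A : Set S) \ {x} with hA'
    have hyA' : y ∉ A' := fun h => hyA h.1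
    have hRlt : ee p A' x x < 1 := R_lt_one p hp hrow A HEN hx
    have hRne : ee p A' x x ≠ ⊤ := (hRlt.trans ENNReal.one_lt_top).ne
    have hEne : ee p (↑A) x y ≠ ⊤ := ee_ne_top p hp hrow hyA x
    have hE'ne : ∀ b : S, ee p A' b y ≠ ⊤ := fun b => ee_ne_top p hp hrow hyA' b
    set g : S → ℝ := fun b => (A'.indicator (fun c => ee p A' c y) b).toReal with hg
    set r : ℝ := (ee p A' x x).toReal with hr
    set e : ℝ := (ee p (↑A : Set S) x y).toReal with he
    have hindne : ∀ b : S, A'.indicator (fun c => ee p A' c y) b ≠ ⊤ := by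
      intro b
      by_cases hbm : b ∈ A'
      · rw [Set.indicator_of_mem hbm]; exact hE'ne b
      · rw [Set.indicator_of_notMem hbm]; exact ENNReal.zero_ne_top
    -- real identity 1
    have hid' : e = (ee p A' x y).toReal + r * e := by
      have h := congrArg ENNReal.toReal (split_at p (↑A) hxA hyA x)
      rwa [ENNReal.toReal_add (hE'ne x) (ENNReal.mul_ne_top hRne hEne),
        ENNReal.toReal_mul] at h
    -- real identity 2
    have hfs' : (ee p A' x y).toReal = p x y + ∑ b : S, p x b * g b := by
      have h := congrArg ENNReal.toReal (first_step p A' hyA' x)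
      have hsumne : (∑ b : S, ENNReal.ofReal (p x b) *
          A'.indicator (fun c => ee p A' c y) b) ≠ ⊤ := by
        rw [← lt_top_iff_ne_top]
        exact ENNReal.sum_lt_top.2 fun b _ => lt_top_iff_ne_top.2
          (ENNReal.mul_ne_top ENNReal.ofReal_ne_top (hindne b))
      rw [ENNReal.toReal_add ENNReal.ofReal_ne_top hsumne,
        ENNReal.toReal_ofReal (hp x y),
        ENNReal.toReal_sum (fun b _ => ENNReal.mul_ne_top ENNReal.ofReal_ne_top
          (hindne b))] at h
      rw [h]
      congr 1
      exact Finset.sum_congr rfl fun b _ => by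
        rw [ENNReal.toReal_mul, ENNReal.toReal_ofReal (hp x b)]
    have hrlt1 : r < 1 := by
      have := (ENNReal.toReal_lt_toReal hRne ENNReal.one_ne_top).2 hRlt
      simpa using this
    have h1rne : (1 : ℝ) - r ≠ 0 := by
      have : (0:ℝ) < 1 - r := by linarith
      linarith
    have key : e * (1 - r) = p x y + ∑ b : S, p x b * g b := by
      rw [hfs'] at hid'
      have hring : e * (1 - r) = e - r * e := by ring
      linarith
    -- bridge returnAvoid
    have hq : returnAvoid p {z | z ∉ (↑A : Set S) ∨ z ∈ ([x] : List S)} x = r := by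
      rw [returnAvoid_eq p hp]
      have hset : ({z | z ∉ (↑A : Set S) ∨ z ∈ ([x] : List S)}ᶜ : Set S) = A' := by
        ext z
        simp only [Set.mem_compl_iff, Set.mem_setOf_eq, not_or, not_not,
          List.mem_singleton, hA', Set.mem_diff, Set.mem_singleton_iff]
      rw [hset]
    -- IH for inner sums
    have hIH : ∀ b : S, b ∈ (↑A : Set S) ∧ b ≠ x →
        (∑' δ : {δ : List S // SimplePathIn A' b y δ ∧ 0 < pathProb p δ},
          rhsProd p A' [] δ.1) = (ee p A' b y).toReal := by
      intro b hb
      have hbe : b ∈ A.erase x := Finset.mem_erase.2 ⟨hb.2, hb.1⟩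
      have hye : y ∉ A.erase x := fun h => hy (Finset.mem_of_mem_erase h)
      have hce : (A.erase x).card ≤ n := by
        rw [Finset.card_erase_of_mem hx]
        omega
      have hres := IH (A.erase x) hce (HEN_erase p A HEN hx) b hbe y hye
      rw [Finset.coe_erase] at hres
      exact hres.symm
    -- assemble
    show e = _
    rw [rhs_sum p hp (↑A : Set S) hxA hyA, hq]
    have hstep : e = p x y / (1 - r) + ∑ b : S, p x b * g b / (1 - r) := by
      rw [← Finset.sum_div, ← add_div, ← key, mul_div_assoc,
        div_self h1rne, mul_one]
    rw [hstep]
    congr 1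
    apply Finset.sum_congr rfl
    intro b _
    split_ifs with hb
    · rw [hIH b hb]
      have hbm : b ∈ A' := by
        rw [hA']
        exact ⟨hb.1, by simpa using hb.2⟩
      have hgb : g b = (ee p A' b y).toReal := by
        show (A'.indicator (fun c => ee p A' c y) b).toReal = _
        rw [Set.indicator_of_mem hbm]
      rw [hgb]
      ring
    · have hbm : b ∉ A' := by
        rw [hA']
        intro hmem
        exact hb ⟨hmem.1, by simpa using hmem.2⟩
      have hgb : g b = 0 := by
        show (A'.indicator (fun c => ee p A' c y) b).toReal = 0
        rw [Set.indicator_of_notMem hbm]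
        simp
      rw [hgb]
      simp

end ExitDecomp
end Stage7

theorem exit_probability_decomposition
    {S : Type*} [Fintype S] [DecidableEq S]
    (p : S → S → ℝ) (hp : ∀ x y, 0 ≤ p x y) (hrow : ∀ x, ∑ y, p x y = 1)
    (A : Set S) [DecidablePred (· ∈ A)]
    (hexit : ∀ a ∈ A, ∑ b ∈ Finset.univ.filter (· ∉ A), exitProb p A a b = 1)
    (x : S) (hx : x ∈ A) (y : S) (hy : y ∉ A) :
    exitProb p A x y =
      ∑' γ : {γ : List S // SimplePathIn A x y γ ∧ 0 < pathProb p γ},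
        rhsProd p A [] γ.1 := by
  classical
  have hA : (↑(A.toFinset) : Set S) = A := Set.coe_toFinset A
  have hxF : x ∈ A.toFinset := Set.mem_toFinset.2 hx
  have hyF : y ∉ A.toFinset := fun h => hy (Set.mem_toFinset.1 h)
  have hfeq : Finset.univ.filter (· ∉ A.toFinset) = Finset.univ.filter (· ∉ A) := by
    apply Finset.filter_congr
    intro b _
    simp [Set.mem_toFinset]
  have HEN : ∀ a ∈ A.toFinset,
      ∑ b ∈ Finset.univ.filter (· ∉ A.toFinset),
        ExitDecomp.ee p (↑A.toFinset) a b = 1 := by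
    apply ExitDecomp.hexit_EN p hp hrow A.toFinset
    intro a' ha'
    calc ∑ b ∈ Finset.univ.filter (· ∉ A.toFinset), exitProb p (↑A.toFinset) a' b
        = ∑ b ∈ Finset.univ.filter (· ∉ A), exitProb p A a' b := by rw [hfeq, hA]
      _ = 1 := hexit a' (Set.mem_toFinset.1 ha')
  have hmain := ExitDecomp.main_aux p hp hrow A.toFinset.card A.toFinset le_rfl
    HEN x hxF y hyF
  rw [hA] at hmain
  rw [ExitDecomp.exitProb_eq p hp A y hx, hmain]
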